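/- There exists a function φ₀ ∈ C⁶(ℝ) that is even and positive, with φ₀'(r) = r for 0 ≤ r ≤ 3/2, φ₀'(r) = 2 − (log 2)/(4 log r) for r ≥ 2, 0 < φ₀''(r) ≤ 1 for all r ≥ 0 with φ₀'' decreasing on (3/2, ∞), and a constant c₀ > 0 such that |φ₀⁽ᵏ⁾(r)| ≤ c₀ φ₀''(r) for k = 3, 4, 5, 6 and all r. -/

import Mathlib

open Real Set Filter Topology intervalIntegral MeasureTheory

namespace CW

/-- lower bound `1 - 1/x ≤ log x`. -/
lemma one_sub_inv_le_log {x : ℝ} (hx : 0 < x) : 1 - x⁻¹ ≤ Real.log x := by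
  have h := Real.log_le_sub_one_of_pos (x := x⁻¹) (by positivity)
  rw [Real.log_inv] at h
  linarith

lemma log_32 : (11:ℝ)/30 ≤ Real.log (3/2) := by
  have h1 : (3/2 : ℝ) = (6/5) * (5/4) := by norm_num
  rw [h1, Real.log_mul (by norm_num) (by norm_num)]
  have h2 := one_sub_inv_le_log (x := (6/5:ℝ)) (by norm_num)
  have h3 := one_sub_inv_le_log (x := (5/4:ℝ)) (by norm_num)
  norm_num at h2 h3
  linarith

lemma log_85 : Real.log 2 - 1/4 ≤ Real.log (8/5) := by
  have h1 : (8/5 : ℝ) = 2 / (5/4) := by norm_num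
  rw [h1, Real.log_div (by norm_num) (by norm_num)]
  have h3 := Real.log_le_sub_one_of_pos (x := (5/4:ℝ)) (by norm_num)
  norm_num at h3 ⊢
  linarith

/-- Monotonicity of `expNegInvGlue`. -/
lemma expNegInvGlue_mono : Monotone expNegInvGlue := by
  have hdiff : Differentiable ℝ expNegInvGlue := by
    simpa using expNegInvGlue.differentiable_polynomial_eval_inv_mul 1
  apply monotone_of_deriv_nonneg hdiff
  intro x
  have h := (expNegInvGlue.hasDerivAt_polynomial_eval_inv_mul 1 x).deriv
  simp only [Polynomial.eval_one, one_mul, Polynomial.derivative_one, sub_zero,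
    Polynomial.eval_mul, Polynomial.eval_pow, Polynomial.eval_X] at h
  rw [show (fun x => expNegInvGlue x) = expNegInvGlue from rfl] at h
  rw [h]
  have := expNegInvGlue.nonneg x
  positivity

lemma smoothTransition_mono : Monotone Real.smoothTransition := by
  intro x y hxy
  unfold Real.smoothTransition
  have hx := Real.smoothTransition.pos_denom x
  have hy := Real.smoothTransition.pos_denom y
  rw [div_le_div_iff₀ hx hy]
  have h1 : expNegInvGlue x ≤ expNegInvGlue y := expNegInvGlue_mono hxy
  have h2 : expNegInvGlue (1 - y) ≤ expNegInvGlue (1 - x) := expNegInvGlue_mono (by linarith)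
  have h3 := expNegInvGlue.nonneg x
  have h4 := expNegInvGlue.nonneg (1 - y)
  nlinarith

end CW
noncomputable section

namespace CW

open Real Set Filter Topology intervalIntegral MeasureTheory

/-- the tail weight -/
def ψ (x : ℝ) : ℝ := Real.log 2 / (4 * x * Real.log x ^ 2)

lemma psi_pos {x : ℝ} (hx : 1 < x) : 0 < ψ x := by
  have h2 := Real.log_pos (by norm_num : (1:ℝ) < 2)
  have h3 := Real.log_pos hx
  unfold ψ
  positivity

lemma log_ge_32 {x : ℝ} (hx : 3/2 ≤ x) : (11:ℝ)/30 ≤ Real.log x :=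
  le_trans log_32 (Real.log_le_log (by norm_num) hx)

lemma psi_le_one {x : ℝ} (hx : 3/2 ≤ x) : ψ x ≤ 1 := by
  have hl := log_ge_32 hx
  have hL : Real.log 2 < 0.6931471808 := Real.log_two_lt_d9
  have hd : (121:ℝ)/150 ≤ 4 * x * Real.log x ^ 2 := by nlinarith
  have hdpos : (0:ℝ) < 4 * x * Real.log x ^ 2 := by nlinarith
  rw [ψ, div_le_one hdpos]
  nlinarith

lemma psi_le_two {x : ℝ} (hx : 29/20 ≤ x) : ψ x ≤ 2 := by
  have hl : (9:ℝ)/29 ≤ Real.log x := by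
    have := one_sub_inv_le_log (x := (29/20:ℝ)) (by norm_num)
    have h2 := Real.log_le_log (by norm_num) hx
    norm_num at this
    linarith
  have hL : Real.log 2 < 0.6931471808 := Real.log_two_lt_d9
  have hdpos : (0:ℝ) < 4 * x * Real.log x ^ 2 := by nlinarith
  rw [ψ, div_le_iff₀ hdpos]
  nlinarith

lemma psi_anti {x y : ℝ} (hx : 3/2 ≤ x) (hxy : x ≤ y) : ψ y ≤ ψ x := by
  have hlx : (11:ℝ)/30 ≤ Real.log x := log_ge_32 hx
  have hly : Real.log x ≤ Real.log y := Real.log_le_log (by linarith) hxy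
  have hL : (0:ℝ) ≤ Real.log 2 := Real.log_nonneg (by norm_num)
  have h1 : (0:ℝ) < 4 * x * Real.log x ^ 2 := by nlinarith
  have hsq : Real.log x ^ 2 ≤ Real.log y ^ 2 := by nlinarith
  have h2 : 4 * x * Real.log x ^ 2 ≤ 4 * y * Real.log y ^ 2 := by nlinarith
  exact div_le_div_of_nonneg_left hL h1 h2

/-- the transition bump factor -/
def E (c r : ℝ) : ℝ := (ψ |r| - 1) * Real.smoothTransition (10 * (|r| - c))

lemma E_even (c r : ℝ) : E c (-r) = E c r := by simp [E]

lemma E_zero_of_le {c r : ℝ} (h : |r| ≤ c) : E c r = 0 := by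
  rw [E, Real.smoothTransition.zero_of_nonpos (by linarith), mul_zero]

lemma E_eq_tail {c r : ℝ} (hc : c ≤ 9/5) (hr : 19/10 < r) : E c r = ψ r - 1 := by
  rw [E, abs_of_pos (by linarith), Real.smoothTransition.one_of_one_le (by linarith), mul_one]

lemma E_nonpos {c r : ℝ} (hc : 3/2 ≤ c) : E c r ≤ 0 := by
  rcases le_or_gt (|r|) c with h | h
  · rw [E_zero_of_le h]
  · have h1 : ψ |r| ≤ 1 := psi_le_one (by linarith)
    have h2 := Real.smoothTransition.nonneg (10 * (|r| - c))
    rw [E]; nlinarith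

lemma E_gt_neg_one {c r : ℝ} (hc : 3/2 ≤ c) : -1 < E c r := by
  rcases le_or_gt (|r|) c with h | h
  · rw [E_zero_of_le h]; norm_num
  · have h1 : 0 < ψ |r| := psi_pos (by linarith)
    have h2 := Real.smoothTransition.nonneg (10 * (|r| - c))
    have h3 := Real.smoothTransition.le_one (10 * (|r| - c))
    have h4 : ψ |r| ≤ 1 := psi_le_one (by linarith)
    rw [E]; nlinarith

lemma E_abs_le_three {c r : ℝ} (hc : 29/20 ≤ c) : |E c r| ≤ 3 := by
  rcases le_or_gt (|r|) c with h | h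
  · rw [E_zero_of_le h]; norm_num
  · have h1 : 0 < ψ |r| := psi_pos (by linarith)
    have h4 : ψ |r| ≤ 2 := psi_le_two (by linarith)
    have h2 := Real.smoothTransition.nonneg (10 * (|r| - c))
    have h3 := Real.smoothTransition.le_one (10 * (|r| - c))
    rw [E, abs_mul]
    have : |ψ |r| - 1| ≤ 2 := by rw [abs_le]; constructor <;> nlinarith
    have h5 : |Real.smoothTransition (10 * (|r| - c))| ≤ 1 := by rw [abs_le]; constructor <;> linarith
    nlinarith [abs_nonneg (ψ |r| - 1), abs_nonneg (Real.smoothTransition (10 * (|r| - c)))]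

end CW
namespace CW
open Real Set Filter Topology intervalIntegral MeasureTheory

/-- positive-side formula for `E` -/
def Epos (c x : ℝ) : ℝ := (ψ x - 1) * Real.smoothTransition (10 * (x - c))

lemma Epos_contDiffAt {c x : ℝ} (hx : 1 < x) : ContDiffAt ℝ 4 (Epos c) x := by
  have hx0 : x ≠ 0 := by linarith
  have hlog : Real.log x ≠ 0 := ne_of_gt (Real.log_pos hx)
  have h1 : ContDiffAt ℝ 4 (fun x : ℝ => 4 * x * Real.log x ^ 2) x :=
    (contDiffAt_const.mul contDiffAt_id).mul ((Real.contDiffAt_log.mpr hx0).pow 2)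
  have hpsi : ContDiffAt ℝ 4 ψ x := contDiffAt_const.div h1 (by positivity)
  have hsig : ContDiffAt ℝ 4 (fun x : ℝ => Real.smoothTransition (10 * (x - c))) x := by
    have h2 : ContDiffAt ℝ 4 (fun x : ℝ => 10 * (x - c)) x :=
      contDiffAt_const.mul (contDiffAt_id.sub contDiffAt_const)
    exact (Real.smoothTransition.contDiff (n := 4)).contDiffAt.comp x h2
  exact (hpsi.sub contDiffAt_const).mul hsig

lemma E_contDiff {c : ℝ} (hc : 3/2 ≤ c) : ContDiff ℝ 4 (E c) := by
  rw [contDiff_iff_contDiffAt]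
  intro r
  rcases lt_or_ge 1 r with hr | hr
  · refine (Epos_contDiffAt (c := c) hr).congr_of_eventuallyEq ?_
    filter_upwards [Ioi_mem_nhds hr] with x hx
    rw [E, Epos, abs_of_pos (lt_trans one_pos hx)]
  rcases lt_or_ge r (-1) with hr2 | hr2
  · have hcd : ContDiffAt ℝ 4 (fun x => Epos c (-x)) r :=
      (Epos_contDiffAt (c := c) (x := -r) (by linarith)).comp r contDiffAt_id.neg
    refine hcd.congr_of_eventuallyEq ?_
    filter_upwards [Iio_mem_nhds hr2] with x hx
    have hx0 : x < 0 := lt_trans hx (by norm_num)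
    rw [E, Epos, abs_of_neg hx0]
  · have hopen : {x : ℝ | |x| < 3/2} ∈ 𝓝 r := by
      have ho : IsOpen {x : ℝ | |x| < 3/2} := isOpen_lt continuous_abs continuous_const
      refine ho.mem_nhds ?_
      simp only [mem_setOf_eq, abs_lt]
      constructor <;> linarith
    refine (contDiffAt_const (c := 0)).congr_of_eventuallyEq ?_
    filter_upwards [hopen] with x hx
    exact E_zero_of_le (le_trans (le_of_lt hx) hc)

lemma E_continuous {c : ℝ} (hc : 3/2 ≤ c) : Continuous (E c) :=
  (E_contDiff hc).continuous

lemma E_measurable (c : ℝ) : Measurable (E c) := by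
  unfold E ψ
  apply Measurable.mul
  · apply Measurable.sub _ measurable_const
    exact measurable_const.div
      ((measurable_const.mul measurable_abs).mul
        ((Real.measurable_log.comp measurable_abs).pow_const 2))
  · exact Real.smoothTransition.continuous.measurable.comp
      (measurable_const.mul (measurable_abs.sub measurable_const))

lemma E_continuous_in_c (t : ℝ) : Continuous (fun c => E c t) := by
  unfold E
  exact continuous_const.mul
    (Real.smoothTransition.continuous.comp
      (continuous_const.mul (continuous_const.sub continuous_id)))

end CW
namespace CW
open Real Set Filter Topology intervalIntegral MeasureTheory

lemma psi_continuousAt {t : ℝ} (ht : 1 < t) : ContinuousAt ψ t := by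
  have ht0 : t ≠ 0 := by linarith
  have hlog : Real.log t ≠ 0 := ne_of_gt (Real.log_pos ht)
  exact continuousAt_const.div
    ((continuousAt_const.mul continuousAt_id).mul
      ((Real.continuousAt_log ht0).pow 2)) (by positivity)

lemma hasDerivAt_Fpsi {t : ℝ} (ht : 8/5 ≤ t) :
    HasDerivAt (fun t => -(Real.log 2 / (4 * Real.log t)) - t) (ψ t - 1) t := by
  have ht1 : (1:ℝ) < t := by linarith
  have ht0 : t ≠ 0 := by linarith
  have hlog : Real.log t ≠ 0 := ne_of_gt (Real.log_pos ht1)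
  have h1 : HasDerivAt (fun t : ℝ => 4 * Real.log t) (4 * t⁻¹) t :=
    (Real.hasDerivAt_log ht0).const_mul 4
  have h2 : HasDerivAt (fun t : ℝ => (4 * Real.log t)⁻¹)
      (-(4 * t⁻¹) / (4 * Real.log t) ^ 2) t := h1.inv (by positivity)
  have h3 := ((h2.const_mul (Real.log 2)).neg).sub (hasDerivAt_id t)
  refine h3.congr_deriv (Eq.symm ?_)
  rw [ψ]; field_simp

lemma integral_psi_sub_one {a b : ℝ} (ha : 8/5 ≤ a) (hab : a ≤ b) :
    ∫ t in a..b, (ψ t - 1) =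
      (-(Real.log 2 / (4 * Real.log b)) - b) - (-(Real.log 2 / (4 * Real.log a)) - a) := by
  apply intervalIntegral.integral_eq_sub_of_hasDerivAt
  · intro t ht
    rw [uIcc_of_le hab] at ht
    exact hasDerivAt_Fpsi (le_trans ha ht.1)
  · apply ContinuousOn.intervalIntegrable
    intro t ht
    rw [uIcc_of_le hab] at ht
    exact ((psi_continuousAt (by linarith [ht.1])).sub continuousAt_const).continuousWithinAt

/-- the odd derivative `φ₀'` -/
def G (c r : ℝ) : ℝ := r + ∫ t in (0:ℝ)..r, E c t

lemma G_hasDerivAt {c : ℝ} (hc : 3/2 ≤ c) (r : ℝ) : HasDerivAt (G c) (1 + E c r) r :=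
  (hasDerivAt_id r).add ((E_continuous hc).integral_hasStrictDerivAt 0 r).hasDerivAt

lemma G_differentiable {c : ℝ} (hc : 3/2 ≤ c) : Differentiable ℝ (G c) :=
  fun r => (G_hasDerivAt hc r).differentiableAt

lemma G_continuous {c : ℝ} (hc : 3/2 ≤ c) : Continuous (G c) :=
  (G_differentiable hc).continuous

lemma deriv_G {c : ℝ} (hc : 3/2 ≤ c) : deriv (G c) = fun r => 1 + E c r :=
  funext fun r => (G_hasDerivAt hc r).deriv

lemma G_odd (c r : ℝ) : G c (-r) = -(G c r) := by
  have h1 : (∫ t in (0:ℝ)..r, E c (-t)) = ∫ t in (-r)..(0:ℝ), E c t := by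
    simpa using intervalIntegral.integral_comp_neg (a := (0:ℝ)) (b := r) (f := E c)
  have h2 : (∫ t in (0:ℝ)..r, E c (-t)) = ∫ t in (0:ℝ)..r, E c t := by
    simp only [E_even]
  have h3 : (∫ t in (0:ℝ)..(-r), E c t) = -∫ t in (-r)..(0:ℝ), E c t :=
    intervalIntegral.integral_symm _ _
  rw [G, G, h3, ← h1, h2]
  ring

lemma G_eq_id {c r : ℝ} (hc : 3/2 ≤ c) (h0 : 0 ≤ r) (h32 : r ≤ 3/2) : G c r = r := by
  have hz : ∀ t ∈ uIcc (0:ℝ) r, E c t = (fun _ => (0:ℝ)) t := by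
    intro t ht
    rw [uIcc_of_le h0] at ht
    exact E_zero_of_le (by rw [abs_of_nonneg ht.1]; linarith [ht.2])
  rw [G, intervalIntegral.integral_congr hz, intervalIntegral.integral_zero, add_zero]

lemma G_nonneg {c r : ℝ} (hc : 3/2 ≤ c) (h0 : 0 ≤ r) : 0 ≤ G c r := by
  have hmono : (∫ t in (0:ℝ)..r, (-1:ℝ)) ≤ ∫ t in (0:ℝ)..r, E c t := by
    apply intervalIntegral.integral_mono_on h0
    · exact intervalIntegrable_const
    · exact (E_continuous hc).intervalIntegrable 0 r
    · intro x _; linarith [E_gt_neg_one (r := x) hc]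
  have : (∫ t in (0:ℝ)..r, (-1:ℝ)) = -r := by simp
  rw [G]; linarith

end CW
namespace CW
open Real Set Filter Topology intervalIntegral MeasureTheory

/-- the tuning integral -/
def J (c : ℝ) : ℝ := ∫ t in (0:ℝ)..2, E c t

lemma J_continuousOn : ContinuousOn J (Icc (3/2) (9/5)) := by
  intro c₀ hc₀
  apply ContinuousAt.continuousWithinAt
  apply intervalIntegral.continuousAt_of_dominated_interval
    (bound := fun _ => (3:ℝ))
  · exact Eventually.of_forall fun c => (E_measurable c).aestronglyMeasurable
  · have hnb : Ioi (29/20:ℝ) ∈ 𝓝 c₀ := Ioi_mem_nhds (by linarith [hc₀.1])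
    filter_upwards [hnb] with c hcgt
    exact MeasureTheory.ae_of_all _ fun t _ => by
      rw [Real.norm_eq_abs]; exact E_abs_le_three (le_of_lt hcgt)
  · exact intervalIntegrable_const
  · exact MeasureTheory.ae_of_all _ fun t _ => (E_continuous_in_c t).continuousAt

lemma log_two_ne : Real.log 2 ≠ 0 := ne_of_gt (Real.log_pos (by norm_num))

lemma J_at_95 : -(1/4:ℝ) ≤ J (9/5) := by
  have hc : (3/2:ℝ) ≤ 9/5 := by norm_num
  have hint1 : IntervalIntegrable (E (9/5)) volume 0 (9/5) :=
    (E_continuous hc).intervalIntegrable _ _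
  have hint2 : IntervalIntegrable (E (9/5)) volume (9/5) 2 :=
    (E_continuous hc).intervalIntegrable _ _
  have hadd := intervalIntegral.integral_add_adjacent_intervals hint1 hint2
  have h1 : (∫ t in (0:ℝ)..(9/5), E (9/5) t) = 0 := by
    have hz : ∀ t ∈ uIcc (0:ℝ) (9/5), E (9/5) t = (fun _ => (0:ℝ)) t := by
      intro t ht
      rw [uIcc_of_le (by norm_num)] at ht
      exact E_zero_of_le (by rw [abs_of_nonneg ht.1]; exact ht.2)
    rw [intervalIntegral.integral_congr hz, intervalIntegral.integral_zero]
  have h2 : (-(1/5):ℝ) ≤ ∫ t in (9/5:ℝ)..2, E (9/5) t := by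
    have hmono : (∫ t in (9/5:ℝ)..2, (-1:ℝ)) ≤ ∫ t in (9/5:ℝ)..2, E (9/5) t := by
      apply intervalIntegral.integral_mono_on (by norm_num)
        intervalIntegrable_const hint2
      intro x _; linarith [E_gt_neg_one (r := x) hc]
    have hc2 : (∫ t in (9/5:ℝ)..2, (-1:ℝ)) = -(1/5) := by simp; norm_num
    linarith
  rw [J, ← hadd, h1]
  linarith

lemma J_at_32 : J (3/2) ≤ -(1/4:ℝ) := by
  have hc : (3/2:ℝ) ≤ 3/2 := le_refl _
  have hint1 : IntervalIntegrable (E (3/2)) volume 0 (8/5) :=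
    (E_continuous hc).intervalIntegrable _ _
  have hint2 : IntervalIntegrable (E (3/2)) volume (8/5) 2 :=
    (E_continuous hc).intervalIntegrable _ _
  have hadd := intervalIntegral.integral_add_adjacent_intervals hint1 hint2
  have h1 : (∫ t in (0:ℝ)..(8/5), E (3/2) t) ≤ 0 := by
    have hmono : (∫ t in (0:ℝ)..(8/5), E (3/2) t) ≤ ∫ t in (0:ℝ)..(8/5), (0:ℝ) := by
      apply intervalIntegral.integral_mono_on (by norm_num) hint1 intervalIntegrable_const
      intro x _; exact E_nonpos hc
    simpa using hmono
  have h2 : (∫ t in (8/5:ℝ)..2, E (3/2) t) ≤ -(1/4) + 1/4 - (1/4 : ℝ) := by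
    have hcg : ∀ t ∈ uIcc (8/5:ℝ) 2, E (3/2) t = (fun t => ψ t - 1) t := by
      intro t ht
      rw [uIcc_of_le (by norm_num)] at ht
      rw [E, abs_of_pos (by linarith [ht.1]),
        Real.smoothTransition.one_of_one_le (by linarith [ht.1])]
      ring
    rw [intervalIntegral.integral_congr hcg,
      integral_psi_sub_one (le_refl _) (by norm_num)]
    have hL : (0.6931471803:ℝ) < Real.log 2 := Real.log_two_gt_d9
    have hL2 : Real.log 2 < 0.6931471808 := Real.log_two_lt_d9
    have h85 : Real.log 2 - 1/4 ≤ Real.log (8/5) := log_85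
    have h85pos : (0:ℝ) < Real.log (8/5) := by linarith
    have hq : Real.log 2 / (4 * Real.log 2) = 1/4 := by
      field_simp
    have hq2 : Real.log 2 / (4 * Real.log (8/5)) ≤ 2/5 := by
      rw [div_le_iff₀ (by positivity)]
      nlinarith
    rw [hq]
    nlinarith
  rw [J, ← hadd]
  linarith

lemma exists_c : ∃ c, c ∈ Icc (3/2:ℝ) (9/5) ∧ J c = -(1/4) := by
  have hIVT := intermediate_value_Icc (by norm_num : (3/2:ℝ) ≤ 9/5) J_continuousOn
  have hmem : (-(1/4):ℝ) ∈ Icc (J (3/2)) (J (9/5)) := ⟨J_at_32, J_at_95⟩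
  obtain ⟨c, hc, hJc⟩ := hIVT hmem
  exact ⟨c, hc, hJc⟩

lemma G_tail {c r : ℝ} (hc1 : 3/2 ≤ c) (hc2 : c ≤ 9/5) (hJ : J c = -(1/4)) (hr : 2 ≤ r) :
    G c r = 2 - Real.log 2 / (4 * Real.log r) := by
  have hint1 : IntervalIntegrable (E c) volume 0 2 :=
    (E_continuous hc1).intervalIntegrable _ _
  have hint2 : IntervalIntegrable (E c) volume 2 r :=
    (E_continuous hc1).intervalIntegrable _ _
  have hadd := intervalIntegral.integral_add_adjacent_intervals hint1 hint2
  have hcg : ∀ t ∈ uIcc (2:ℝ) r, E c t = (fun t => ψ t - 1) t := by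
    intro t ht
    rw [uIcc_of_le hr] at ht
    exact E_eq_tail hc2 (by linarith [ht.1])
  have h2 : (∫ t in (2:ℝ)..r, E c t) =
      (-(Real.log 2 / (4 * Real.log r)) - r) - (-(Real.log 2 / (4 * Real.log 2)) - 2) := by
    rw [intervalIntegral.integral_congr hcg, integral_psi_sub_one (by norm_num) hr]
  have hq : Real.log 2 / (4 * Real.log 2) = 1/4 := by field_simp
  rw [G, ← hadd]
  rw [show (∫ t in (0:ℝ)..2, E c t) = -(1/4) from hJ, h2, hq]
  ring

end CW
namespace CW
open Real Set Filter Topology intervalIntegral MeasureTheory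

/-- the weight function -/
def φf (c r : ℝ) : ℝ := 1 + ∫ t in (0:ℝ)..r, G c t

lemma φ_hasDerivAt {c : ℝ} (hc : 3/2 ≤ c) (r : ℝ) : HasDerivAt (φf c) (G c r) r :=
  ((G_continuous hc).integral_hasStrictDerivAt 0 r).hasDerivAt.const_add 1

lemma deriv_φ {c : ℝ} (hc : 3/2 ≤ c) : deriv (φf c) = G c :=
  funext fun r => (φ_hasDerivAt hc r).deriv

lemma φ_even (c r : ℝ) : φf c (-r) = φf c r := by
  have h1 : (∫ t in (0:ℝ)..r, G c (-t)) = ∫ t in (-r)..(0:ℝ), G c t := by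
    simpa using intervalIntegral.integral_comp_neg (a := (0:ℝ)) (b := r) (f := G c)
  have h2 : (∫ t in (0:ℝ)..r, G c (-t)) = ∫ t in (0:ℝ)..r, -(G c t) := by
    simp only [G_odd]
  have h3 : (∫ t in (0:ℝ)..(-r), G c t) = -∫ t in (-r)..(0:ℝ), G c t :=
    intervalIntegral.integral_symm _ _
  have h4 : (∫ t in (0:ℝ)..r, -(G c t)) = -∫ t in (0:ℝ)..r, G c t :=
    intervalIntegral.integral_neg
  rw [φf, φf, h3, ← h1, h2, h4]
  ring

lemma φ_pos {c : ℝ} (hc : 3/2 ≤ c) (r : ℝ) : 0 < φf c r := by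
  have key : ∀ s : ℝ, 0 ≤ s → 0 < φf c s := by
    intro s hs
    have hmono : (∫ t in (0:ℝ)..s, (0:ℝ)) ≤ ∫ t in (0:ℝ)..s, G c t := by
      apply intervalIntegral.integral_mono_on hs intervalIntegrable_const
        ((G_continuous hc).intervalIntegrable _ _)
      intro x hx; exact G_nonneg hc hx.1
    simp only [intervalIntegral.integral_zero] at hmono
    rw [φf]; linarith
  rcases le_or_gt 0 r with h | h
  · exact key r h
  · rw [← φ_even]; exact key (-r) (by linarith)

lemma φ_contDiff {c : ℝ} (hc : 3/2 ≤ c) : ContDiff ℝ 6 (φf c) := by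
  have hE : ContDiff ℝ 4 (E c) := E_contDiff hc
  have hG : ContDiff ℝ 5 (G c) := by
    rw [show (5 : WithTop ℕ∞) = 4 + 1 by norm_num]
    refine contDiff_succ_iff_deriv.2 ⟨G_differentiable hc, by simp, ?_⟩
    rw [deriv_G hc]
    exact contDiff_const.add hE
  rw [show (6 : WithTop ℕ∞) = 5 + 1 by norm_num]
  refine contDiff_succ_iff_deriv.2
    ⟨fun r => (φ_hasDerivAt hc r).differentiableAt, by simp, ?_⟩
  rw [deriv_φ hc]
  exact hG

lemma iteratedDeriv_two_φ {c : ℝ} (hc : 3/2 ≤ c) :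
    iteratedDeriv 2 (φf c) = fun r => 1 + E c r := by
  rw [show (2:ℕ) = 1 + 1 from rfl, iteratedDeriv_succ', deriv_φ hc, iteratedDeriv_one,
    deriv_G hc]

lemma iteratedDeriv_shift {c : ℝ} (hc : 3/2 ≤ c) (m : ℕ) :
    iteratedDeriv (m+3) (φf c) = iteratedDeriv (m+1) (E c) := by
  rw [show m+3 = (m+2)+1 from rfl, iteratedDeriv_succ', deriv_φ hc,
    show m+2 = (m+1)+1 from rfl, iteratedDeriv_succ', deriv_G hc,
    iteratedDeriv_succ', iteratedDeriv_succ']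
  have hd : (deriv fun r => 1 + E c r) = deriv (E c) := funext fun x => deriv_const_add 1
  rw [hd]

lemma H_pos {c : ℝ} (hc : 3/2 ≤ c) (r : ℝ) : 0 < 1 + E c r := by
  linarith [E_gt_neg_one (r := r) hc]

lemma H_le_one {c : ℝ} (hc : 3/2 ≤ c) (r : ℝ) : 1 + E c r ≤ 1 := by
  linarith [E_nonpos (r := r) hc]

lemma H_anti {c : ℝ} (hc : 3/2 ≤ c) : AntitoneOn (fun r => 1 + E c r) (Ioi (3/2 : ℝ)) := by
  intro x hx y hy hxy
  simp only [mem_Ioi] at hx hy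
  have hx0 : (0:ℝ) < x := by linarith
  have hy0 : (0:ℝ) < y := by linarith
  have hpx : ψ x ≤ 1 := psi_le_one (le_of_lt hx)
  have hpy : ψ y ≤ 1 := psi_le_one (le_of_lt hy)
  have hpxy : ψ y ≤ ψ x := psi_anti (le_of_lt hx) hxy
  have hs : Real.smoothTransition (10 * (x - c)) ≤ Real.smoothTransition (10 * (y - c)) :=
    smoothTransition_mono (by linarith)
  have hsx := Real.smoothTransition.nonneg (10 * (x - c))
  have hsy := Real.smoothTransition.nonneg (10 * (y - c))
  have key : (1 - ψ x) * Real.smoothTransition (10 * (x - c)) ≤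
      (1 - ψ y) * Real.smoothTransition (10 * (y - c)) :=
    mul_le_mul (by linarith) hs hsx (by linarith)
  simp only [E, abs_of_pos hx0, abs_of_pos hy0]
  nlinarith

end CW
namespace CW
open Real Set Filter Topology intervalIntegral MeasureTheory

/-- building block for tail derivatives -/
def T (a b : ℕ) (r : ℝ) : ℝ := (r⁻¹)^a * ((Real.log r)⁻¹)^b

lemma T_nonneg (a b : ℕ) {r : ℝ} (hr : 1 < r) : 0 ≤ T a b r := by
  have h1 : (0:ℝ) < r := by linarith
  have h2 : 0 < Real.log r := Real.log_pos hr
  unfold T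
  positivity

lemma T_hasDerivAt (a b : ℕ) {r : ℝ} (hr : 1 < r) :
    HasDerivAt (T (a+1) (b+1))
      (-(((a:ℝ)+1) * T (a+2) (b+1) r + ((b:ℝ)+1) * T (a+2) (b+2) r)) r := by
  have hr0 : r ≠ 0 := by linarith
  have hrpos : (0:ℝ) < r := by linarith
  have hlogpos : 0 < Real.log r := Real.log_pos hr
  have hlog : Real.log r ≠ 0 := ne_of_gt hlogpos
  have h1 : HasDerivAt (fun x : ℝ => x⁻¹) (-(r^2)⁻¹) r := hasDerivAt_inv hr0
  have h2 : HasDerivAt (fun x : ℝ => (x⁻¹)^(a+1))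
      ((a+1:ℕ) * (r⁻¹)^(a+1-1) * (-(r^2)⁻¹)) r := h1.pow (a+1)
  have h3 : HasDerivAt (fun x : ℝ => (Real.log x)⁻¹) (-r⁻¹/(Real.log r)^2) r :=
    (Real.hasDerivAt_log hr0).inv hlog
  have h4 : HasDerivAt (fun x : ℝ => ((Real.log x)⁻¹)^(b+1))
      ((b+1:ℕ) * ((Real.log r)⁻¹)^(b+1-1) * (-r⁻¹/(Real.log r)^2)) r := h3.pow (b+1)
  have h5 := h2.mul h4
  have heq : ((fun x : ℝ => (x⁻¹)^(a+1)) * fun x : ℝ => ((Real.log x)⁻¹)^(b+1)) = T (a+1) (b+1) := rfl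
  rw [heq] at h5
  refine h5.congr_deriv (Eq.symm ?_)
  simp only [Nat.add_sub_cancel, Nat.cast_add, Nat.cast_one, T]
  simp only [inv_pow]
  field_simp
  ring

lemma psi_eq_T {x : ℝ} (hx : 1 < x) : ψ x = Real.log 2/4 * T 1 2 x := by
  have hx0 : x ≠ 0 := by linarith
  have hlog : Real.log x ≠ 0 := ne_of_gt (Real.log_pos hx)
  simp only [T, pow_one, inv_pow]
  rw [ψ]
  field_simp

def Ψ1 (r : ℝ) : ℝ := -(Real.log 2/4) * (T 2 2 r + 2*T 2 3 r)
def Ψ2 (r : ℝ) : ℝ := (Real.log 2/4) * (2*T 3 2 r + 6*T 3 3 r + 6*T 3 4 r)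
def Ψ3 (r : ℝ) : ℝ := -(Real.log 2/4) * (6*T 4 2 r + 22*T 4 3 r + 36*T 4 4 r + 24*T 4 5 r)
def Ψ4 (r : ℝ) : ℝ :=
  (Real.log 2/4) * (24*T 5 2 r + 100*T 5 3 r + 210*T 5 4 r + 240*T 5 5 r + 120*T 5 6 r)

lemma Etail_hasDerivAt {r : ℝ} (hr : 1 < r) :
    HasDerivAt (fun x => ψ x - 1) (Ψ1 r) r := by
  have h := ((T_hasDerivAt 0 1 hr).const_mul (Real.log 2/4)).sub_const 1
  have heq : (fun x => ψ x - 1) =ᶠ[𝓝 r] fun x => Real.log 2/4 * T (0+1) (1+1) x - 1 := by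
    filter_upwards [Ioi_mem_nhds hr] with x hx
    rw [psi_eq_T hx]
    try norm_num
  refine HasDerivAt.congr_of_eventuallyEq ?_ heq
  convert h using 1
  unfold Ψ1
  push_cast
  norm_num
  try ring

lemma Psi1_hasDerivAt {r : ℝ} (hr : 1 < r) : HasDerivAt Ψ1 (Ψ2 r) r := by
  have h := ((T_hasDerivAt 1 1 hr).add ((T_hasDerivAt 1 2 hr).const_mul 2)).const_mul
    (-(Real.log 2/4))
  refine h.congr_deriv (Eq.symm ?_)
  unfold Ψ2
  push_cast
  norm_num
  try ring

lemma Psi2_hasDerivAt {r : ℝ} (hr : 1 < r) : HasDerivAt Ψ2 (Ψ3 r) r := by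
  have h := (((T_hasDerivAt 2 1 hr).const_mul 2).add
    (((T_hasDerivAt 2 2 hr).const_mul 6).add ((T_hasDerivAt 2 3 hr).const_mul 6))).const_mul
    (Real.log 2/4)
  refine (h.congr_deriv (Eq.symm ?_)).congr_of_eventuallyEq (Filter.EventuallyEq.of_eq ?_)
  swap
  · funext y; unfold Ψ2; norm_num; try ring
  · unfold Ψ3; push_cast; norm_num; try ring

lemma Psi3_hasDerivAt {r : ℝ} (hr : 1 < r) : HasDerivAt Ψ3 (Ψ4 r) r := by
  have h := ((((T_hasDerivAt 3 1 hr).const_mul 6).add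
    (((T_hasDerivAt 3 2 hr).const_mul 22).add
      (((T_hasDerivAt 3 3 hr).const_mul 36).add
        ((T_hasDerivAt 3 4 hr).const_mul 24)))).const_mul (-(Real.log 2/4)))
  refine (h.congr_deriv (Eq.symm ?_)).congr_of_eventuallyEq (Filter.EventuallyEq.of_eq ?_)
  swap
  · funext y; unfold Ψ3; norm_num; try ring
  · unfold Ψ4; push_cast; norm_num; try ring

end CW
namespace CW
open Real Set Filter Topology intervalIntegral MeasureTheory

lemma iter1_tail {c : ℝ} (hc2 : c ≤ 9/5) {r : ℝ} (hr : 19/10 < r) :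
    iteratedDeriv 1 (E c) r = Ψ1 r := by
  rw [iteratedDeriv_one]
  have heq : E c =ᶠ[𝓝 r] fun x => ψ x - 1 := by
    filter_upwards [Ioi_mem_nhds hr] with x hx
    exact E_eq_tail hc2 hx
  rw [heq.deriv_eq]
  exact (Etail_hasDerivAt (by linarith)).deriv

lemma iter2_tail {c : ℝ} (hc2 : c ≤ 9/5) {r : ℝ} (hr : 19/10 < r) :
    iteratedDeriv 2 (E c) r = Ψ2 r := by
  rw [show (2:ℕ) = 1+1 from rfl, iteratedDeriv_succ]
  have heq : iteratedDeriv 1 (E c) =ᶠ[𝓝 r] Ψ1 := by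
    filter_upwards [Ioi_mem_nhds hr] with x hx
    exact iter1_tail hc2 hx
  rw [heq.deriv_eq]
  exact (Psi1_hasDerivAt (by linarith)).deriv

lemma iter3_tail {c : ℝ} (hc2 : c ≤ 9/5) {r : ℝ} (hr : 19/10 < r) :
    iteratedDeriv 3 (E c) r = Ψ3 r := by
  rw [show (3:ℕ) = 2+1 from rfl, iteratedDeriv_succ]
  have heq : iteratedDeriv 2 (E c) =ᶠ[𝓝 r] Ψ2 := by
    filter_upwards [Ioi_mem_nhds hr] with x hx
    exact iter2_tail hc2 hx
  rw [heq.deriv_eq]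
  exact (Psi2_hasDerivAt (by linarith)).deriv

lemma iter4_tail {c : ℝ} (hc2 : c ≤ 9/5) {r : ℝ} (hr : 19/10 < r) :
    iteratedDeriv 4 (E c) r = Ψ4 r := by
  rw [show (4:ℕ) = 3+1 from rfl, iteratedDeriv_succ]
  have heq : iteratedDeriv 3 (E c) =ᶠ[𝓝 r] Ψ3 := by
    filter_upwards [Ioi_mem_nhds hr] with x hx
    exact iter3_tail hc2 hx
  rw [heq.deriv_eq]
  exact (Psi3_hasDerivAt (by linarith)).deriv

lemma T_le (a b : ℕ) {r : ℝ} (hr : 2 ≤ r) :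
    T (a+1) (b+2) r ≤ (1/2)^a * (3/2)^b * T 1 2 r := by
  have hr1 : (1:ℝ) < r := by linarith
  have hrpos : (0:ℝ) < r := by linarith
  have hlog : 0 < Real.log r := Real.log_pos hr1
  have hx : (0:ℝ) < r⁻¹ := by positivity
  have hxle : r⁻¹ ≤ 1/2 := by
    rw [show (1:ℝ)/2 = 2⁻¹ by norm_num]
    exact inv_anti₀ (by norm_num) hr
  have hy : (0:ℝ) < (Real.log r)⁻¹ := by positivity
  have hyle : (Real.log r)⁻¹ ≤ 3/2 := by
    have h1 : (2/3:ℝ) ≤ Real.log r :=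
      le_trans (by linarith [Real.log_two_gt_d9]) (Real.log_le_log (by norm_num) hr)
    have h2 : (Real.log r)⁻¹ ≤ (2/3:ℝ)⁻¹ := inv_anti₀ (by norm_num) h1
    norm_num at h2
    linarith
  have h1 : r⁻¹^a ≤ (1/2)^a := pow_le_pow_left₀ (le_of_lt hx) hxle a
  have h2 : ((Real.log r)⁻¹)^b ≤ (3/2)^b := pow_le_pow_left₀ (le_of_lt hy) hyle b
  have h3 : r⁻¹^a * ((Real.log r)⁻¹)^b ≤ (1/2)^a * (3/2)^b :=
    mul_le_mul h1 h2 (by positivity) (by positivity)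
  have h4 : 0 ≤ T 1 2 r := T_nonneg 1 2 hr1
  calc T (a+1) (b+2) r = (r⁻¹^a * ((Real.log r)⁻¹)^b) * T 1 2 r := by
        unfold T; rw [pow_add, pow_add, pow_one]; ring
    _ ≤ (1/2)^a * (3/2)^b * T 1 2 r := mul_le_mul_of_nonneg_right h3 h4

lemma combine {A B : ℝ} (k : ℝ) (hk : k ≤ 200) (hB : 0 ≤ B) (hAB : A ≤ k * B) :
    Real.log 2/4 * A ≤ 200 * (Real.log 2/4 * B) := by
  have hL : (0:ℝ) ≤ Real.log 2 / 4 := by positivity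
  have h1 := mul_le_mul_of_nonneg_left hAB hL
  have h2 : Real.log 2/4 * (k*B) ≤ Real.log 2/4 * (200*B) :=
    mul_le_mul_of_nonneg_left (by nlinarith) hL
  nlinarith

lemma Psi_bounds {r : ℝ} (hr : 2 ≤ r) :
    |Ψ1 r| ≤ 200 * ψ r ∧ |Ψ2 r| ≤ 200 * ψ r ∧ |Ψ3 r| ≤ 200 * ψ r ∧ |Ψ4 r| ≤ 200 * ψ r := by
  have hr1 : (1:ℝ) < r := by linarith
  have hL : (0:ℝ) ≤ Real.log 2 / 4 := by positivity
  have hψ : ψ r = Real.log 2/4 * T 1 2 r := psi_eq_T hr1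
  have n12 := T_nonneg 1 2 hr1
  have n22 := T_nonneg 2 2 hr1; have n23 := T_nonneg 2 3 hr1
  have n32 := T_nonneg 3 2 hr1; have n33 := T_nonneg 3 3 hr1; have n34 := T_nonneg 3 4 hr1
  have n42 := T_nonneg 4 2 hr1; have n43 := T_nonneg 4 3 hr1; have n44 := T_nonneg 4 4 hr1
  have n45 := T_nonneg 4 5 hr1
  have n52 := T_nonneg 5 2 hr1; have n53 := T_nonneg 5 3 hr1; have n54 := T_nonneg 5 4 hr1
  have n55 := T_nonneg 5 5 hr1; have n56 := T_nonneg 5 6 hr1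
  have t22 := T_le 1 0 hr; norm_num at t22
  have t23 := T_le 1 1 hr; norm_num at t23
  have t32 := T_le 2 0 hr; norm_num at t32
  have t33 := T_le 2 1 hr; norm_num at t33
  have t34 := T_le 2 2 hr; norm_num at t34
  have t42 := T_le 3 0 hr; norm_num at t42
  have t43 := T_le 3 1 hr; norm_num at t43
  have t44 := T_le 3 2 hr; norm_num at t44
  have t45 := T_le 3 3 hr; norm_num at t45
  have t52 := T_le 4 0 hr; norm_num at t52
  have t53 := T_le 4 1 hr; norm_num at t53
  have t54 := T_le 4 2 hr; norm_num at t54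
  have t55 := T_le 4 3 hr; norm_num at t55
  have t56 := T_le 4 4 hr; norm_num at t56
  refine ⟨?_, ?_, ?_, ?_⟩
  · rw [show Ψ1 r = -(Real.log 2/4 * (T 2 2 r + 2*T 2 3 r)) by unfold Ψ1; ring, abs_neg,
      abs_of_nonneg (mul_nonneg hL (by linarith)), hψ]
    exact combine 2 (by norm_num) n12 (by linarith)
  · rw [show Ψ2 r = Real.log 2/4 * (2*T 3 2 r + 6*T 3 3 r + 6*T 3 4 r) by unfold Ψ2; ring,
      abs_of_nonneg (mul_nonneg hL (by linarith)), hψ]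
    exact combine 7 (by norm_num) n12 (by linarith)
  · rw [show Ψ3 r = -(Real.log 2/4 * (6*T 4 2 r + 22*T 4 3 r + 36*T 4 4 r + 24*T 4 5 r)) by
      unfold Ψ3; ring, abs_neg, abs_of_nonneg (mul_nonneg hL (by linarith)), hψ]
    exact combine 26 (by norm_num) n12 (by linarith)
  · rw [show Ψ4 r = Real.log 2/4 *
        (24*T 5 2 r + 100*T 5 3 r + 210*T 5 4 r + 240*T 5 5 r + 120*T 5 6 r) by unfold Ψ4; ring,
      abs_of_nonneg (mul_nonneg hL (by linarith)), hψ]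
    exact combine 129 (by norm_num) n12 (by linarith)

end CW
open CW in
/-- Existence of the Carleman weight `φ₀`: a `C⁶`, even, positive
function with `φ₀'(r) = r` on `[0, 3/2]`, `φ₀'(r) = 2 − log 2/(4 log r)` for `r ≥ 2`,
`0 < φ₀'' ≤ 1` with `φ₀''` decreasing on `(3/2, ∞)`, and a constant `c₀` with
`|φ₀⁽ᵏ⁾| ≤ c₀ φ₀''` for `k = 3, 4, 5, 6`. -/
theorem carleman_weight_exists :
    ∃ (φ₀ : ℝ → ℝ) (c₀ : ℝ), 0 < c₀ ∧
      ContDiff ℝ 6 φ₀ ∧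
      (∀ r : ℝ, φ₀ (-r) = φ₀ r) ∧
      (∀ r : ℝ, 0 < φ₀ r) ∧
      (∀ r : ℝ, 0 ≤ r → r ≤ 3 / 2 → deriv φ₀ r = r) ∧
      (∀ r : ℝ, 2 ≤ r → deriv φ₀ r = 2 - Real.log 2 / (4 * Real.log r)) ∧
      (∀ r : ℝ, 0 ≤ r → 0 < iteratedDeriv 2 φ₀ r ∧ iteratedDeriv 2 φ₀ r ≤ 1) ∧
      AntitoneOn (iteratedDeriv 2 φ₀) (Set.Ioi (3 / 2 : ℝ)) ∧
      (∀ k : ℕ, k = 3 ∨ k = 4 ∨ k = 5 ∨ k = 6 →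
        ∀ r : ℝ, |iteratedDeriv k φ₀ r| ≤ c₀ * iteratedDeriv 2 φ₀ r) := by
  obtain ⟨c, hcmem, hJc⟩ := CW.exists_c
  obtain ⟨hc1, hc2⟩ := hcmem
  have hE4 : ContDiff ℝ 4 (E c) := E_contDiff hc1
  have hco1 : Continuous (iteratedDeriv 1 (E c)) :=
    hE4.continuous_iteratedDeriv 1 (by norm_num)
  have hco2 : Continuous (iteratedDeriv 2 (E c)) :=
    hE4.continuous_iteratedDeriv 2 (by norm_num)
  have hco3 : Continuous (iteratedDeriv 3 (E c)) :=
    hE4.continuous_iteratedDeriv 3 (by norm_num)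
  have hco4 : Continuous (iteratedDeriv 4 (E c)) :=
    hE4.continuous_iteratedDeriv 4 (by norm_num)
  set Q : ℝ → ℝ := fun x => |iteratedDeriv 1 (E c) x| + |iteratedDeriv 2 (E c) x| +
    |iteratedDeriv 3 (E c) x| + |iteratedDeriv 4 (E c) x| with hQdef
  have hQcont : Continuous Q := ((hco1.abs.add hco2.abs).add hco3.abs).add hco4.abs
  obtain ⟨Cb, hCb⟩ := (isCompact_Icc (a := (-2:ℝ)) (b := 2)).exists_bound_of_continuousOn
    hQcont.continuousOn
  obtain ⟨x₀, hx₀mem, hx₀min⟩ := (isCompact_Icc (a := (-2:ℝ)) (b := 2)).exists_isMinOn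
    ⟨0, by norm_num⟩ ((continuous_const.add (E_continuous hc1)).continuousOn
      (f := fun r => 1 + E c r))
  set m₀ : ℝ := 1 + E c x₀ with hm₀def
  have hm₀pos : 0 < m₀ := H_pos hc1 x₀
  set c₀ : ℝ := max ((Cb+1)/m₀) 200 with hc₀def
  have hc₀pos : 0 < c₀ := lt_of_lt_of_le (by norm_num) (le_max_right _ _)
  -- key derivative bound
  have half : ∀ j : ℕ, 1 ≤ j → j ≤ 4 → ∀ r : ℝ, 0 ≤ r →
      |iteratedDeriv j (E c) r| ≤ c₀ * (1 + E c r) := by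
    intro j hj1 hj4 r hr0
    rcases le_or_gt 2 r with hr2 | hr2
    · -- tail
      have hr19 : (19:ℝ)/10 < r := by linarith
      have hEt : 1 + E c r = ψ r := by rw [E_eq_tail hc2 hr19]; ring
      have hψpos : 0 ≤ ψ r := le_of_lt (psi_pos (by linarith))
      have hb := Psi_bounds hr2
      have h200 : (200:ℝ) ≤ c₀ := le_max_right _ _
      have hfin : (200:ℝ) * ψ r ≤ c₀ * (1 + E c r) := by
        rw [hEt]
        exact mul_le_mul_of_nonneg_right h200 hψpos
      interval_cases j
      · rw [iter1_tail hc2 hr19]; linarith [hb.1]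
      · rw [iter2_tail hc2 hr19]; linarith [hb.2.1]
      · rw [iter3_tail hc2 hr19]; linarith [hb.2.2.1]
      · rw [iter4_tail hc2 hr19]; linarith [hb.2.2.2]
    · -- compact part
      have hrmem : r ∈ Set.Icc (-2:ℝ) 2 := ⟨by linarith, by linarith⟩
      have hQb : Q r ≤ Cb := le_trans (le_abs_self _) (hCb r hrmem)
      have habs : |iteratedDeriv j (E c) r| ≤ Q r := by
        have a1 := abs_nonneg (iteratedDeriv 1 (E c) r)
        have a2 := abs_nonneg (iteratedDeriv 2 (E c) r)
        have a3 := abs_nonneg (iteratedDeriv 3 (E c) r)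
        have a4 := abs_nonneg (iteratedDeriv 4 (E c) r)
        interval_cases j <;> (rw [hQdef]; simp only []; linarith)
      have hm : m₀ ≤ 1 + E c r := hx₀min hrmem
      have h5 : (Cb+1)/m₀ * m₀ = Cb + 1 := div_mul_cancel₀ _ (ne_of_gt hm₀pos)
      have h6 : (Cb+1)/m₀ * m₀ ≤ c₀ * (1 + E c r) :=
        mul_le_mul (le_max_left _ _) hm (le_of_lt hm₀pos) (le_of_lt hc₀pos)
      linarith
  have key : ∀ j : ℕ, 1 ≤ j → j ≤ 4 → ∀ r : ℝ,
      |iteratedDeriv j (E c) r| ≤ c₀ * (1 + E c r) := by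
    intro j hj1 hj4 r
    rcases le_or_gt 0 r with h | h
    · exact half j hj1 hj4 r h
    · have hfe : (fun x => E c (-x)) = E c := funext fun x => E_even c x
      have hneg := iteratedDeriv_comp_neg j (E c) r
      rw [hfe] at hneg
      have habs : |iteratedDeriv j (E c) r| = |iteratedDeriv j (E c) (-r)| := by
        rw [hneg, smul_eq_mul, abs_mul, abs_pow, abs_neg, abs_one, one_pow, one_mul]
      have hEe : (1 : ℝ) + E c r = 1 + E c (-r) := by rw [E_even]
      rw [habs, hEe]
      exact half j hj1 hj4 (-r) (by linarith)
  refine ⟨φf c, c₀, hc₀pos, φ_contDiff hc1, φ_even c, φ_pos hc1, ?_, ?_, ?_, ?_, ?_⟩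
  · intro r h0 h32
    rw [deriv_φ hc1]
    exact G_eq_id hc1 h0 h32
  · intro r hr
    rw [deriv_φ hc1]
    exact G_tail hc1 hc2 hJc hr
  · intro r _
    rw [iteratedDeriv_two_φ hc1]
    exact ⟨H_pos hc1 r, H_le_one hc1 r⟩
  · rw [iteratedDeriv_two_φ hc1]
    exact H_anti hc1
  · intro k hk r
    have h2φ : iteratedDeriv 2 (φf c) r = 1 + E c r := by rw [iteratedDeriv_two_φ hc1]
    rw [h2φ]
    rcases hk with rfl | rfl | rfl | rfl
    · have hs := iteratedDeriv_shift hc1 0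
      rw [show (0:ℕ)+3 = 3 by norm_num, show (0:ℕ)+1 = 1 by norm_num] at hs
      rw [hs]
      exact key 1 (by norm_num) (by norm_num) r
    · have hs := iteratedDeriv_shift hc1 1
      rw [show (1:ℕ)+3 = 4 by norm_num, show (1:ℕ)+1 = 2 by norm_num] at hs
      rw [hs]
      exact key 2 (by norm_num) (by norm_num) r
    · have hs := iteratedDeriv_shift hc1 2
      rw [show (2:ℕ)+3 = 5 by norm_num, show (2:ℕ)+1 = 3 by norm_num] at hs
      rw [hs]
      exact key 3 (by norm_num) (by norm_num) r
    · have hs := iteratedDeriv_shift hc1 3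
      rw [show (3:ℕ)+3 = 6 by norm_num, show (3:ℕ)+1 = 4 by norm_num] at hs
      rw [hs]
      exact key 4 (by norm_num) (by norm_num) r
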